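/- arXiv:1601.05111 — 4 statements merged into one kernel-verified Lean document; each statement's English description precedes it below -/
import Mathlib

section
/- Discrete Dubois–Reymond lemma: let a, b ∈ ℤ with a < b, and let f : {a, …, b−1} → ℝ. If ∑_{t=a}^{b−1} f(t)·(η(t+1) − η(t)) = 0 for every function η : {a, …, b} → ℝ with η(a) = η(b) = 0, then f is constant on {a, …, b−1}, i.e. there exists c ∈ ℝ with f(t) = c for all a ≤ t ≤ b−1. -/
/-- Discrete Dubois–Reymond lemma on ℤ: if ∑_{t=a}^{b−1} f(t)·(η(t+1) − η(t)) = 0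
for every η with η(a) = η(b) = 0, then f is constant on {a, …, b−1}. -/
theorem discrete_dubois_reymond (a b : ℤ) (hab : a < b) (f : ℤ → ℝ)
    (h : ∀ η : ℤ → ℝ, η a = 0 → η b = 0 →
      ∑ t ∈ Finset.Ico a b, f t * (η (t + 1) - η t) = 0) :
    ∃ c : ℝ, ∀ t ∈ Finset.Ico a b, f t = c := by
  refine ⟨f a, ?_⟩
  intro t0 ht0
  simp only [Finset.mem_Ico] at ht0
  rcases eq_or_lt_of_le ht0.1 with h1 | h1
  · rw [← h1]
  · set η : ℤ → ℝ := fun s => if a < s ∧ s ≤ t0 then 1 else 0 with hη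
    have hηa : η a = 0 := by simp [hη]
    have hηb : η b = 0 := by
      simp only [hη, ite_eq_right_iff, one_ne_zero]
      intro hc; omega
    have hsum := h η hηa hηb
    have key : ∑ t ∈ Finset.Ico a b, f t * (η (t + 1) - η t) = f a - f t0 := by
      rw [← Finset.sum_subset (show ({a, t0} : Finset ℤ) ⊆ Finset.Ico a b by
        intro x hx
        simp only [Finset.mem_insert, Finset.mem_singleton] at hx
        simp only [Finset.mem_Ico]
        rcases hx with rfl | rfl <;> omega)]
      · rw [Finset.sum_pair (ne_of_lt h1)]
        have e1 : η (a + 1) = 1 := by simp [hη]; omega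
        have e2 : η (t0 + 1) = 0 := by
          simp only [hη, ite_eq_right_iff, one_ne_zero]; intro hc; omega
        have e3 : η t0 = 1 := by simp [hη]; omega
        rw [e1, e2, e3, hηa]; ring
      · intro x hx hxn
        simp only [Finset.mem_insert, Finset.mem_singleton, not_or] at hxn
        simp only [Finset.mem_Ico] at hx
        have : η (x + 1) = η x := by
          by_cases hc : a < x ∧ x ≤ t0
          · have : a < x + 1 ∧ x + 1 ≤ t0 := by omega
            simp [hη, hc, this]
          · have : ¬(a < x + 1 ∧ x + 1 ≤ t0) := by omega
            simp [hη, hc, this]; omega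
        rw [this]; ring
    rw [key] at hsum
    linarith
end

section
/- Define y : ℝ → ℝ by y(t) = −(3 + 2√3)t² + (4 + 2√3)t. Then y(0) = 0, y(1) = 1, and with F₁ = ∫₀¹ t·y'(t) dt and F₂ = ∫₀¹ (y'(t))² dt one has F₁/F₂ = (3 − 2√3)/12. -/
open intervalIntegral

/-- For y(t) = −(3+2√3)t² + (4+2√3)t one has y(0) = 0, y(1) = 1 and
(∫₀¹ t y'(t) dt) / (∫₀¹ (y'(t))² dt) = (3 − 2√3)/12. -/
theorem extremal_quotient_value
    (y : ℝ → ℝ)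
    (hy : ∀ t, y t = -(3 + 2 * Real.sqrt 3) * t ^ 2 + (4 + 2 * Real.sqrt 3) * t) :
    y 0 = 0 ∧ y 1 = 1 ∧
    (∫ t in (0:ℝ)..1, t * deriv y t) / (∫ t in (0:ℝ)..1, (deriv y t) ^ 2)
      = (3 - 2 * Real.sqrt 3) / 12 := by
  set s := Real.sqrt 3 with hs
  have hs2 : s ^ 2 = 3 := Real.sq_sqrt (by norm_num)
  have hyf : y = fun t => -(3 + 2 * s) * t ^ 2 + (4 + 2 * s) * t := funext hy
  have hd : deriv y = fun t => -(3 + 2 * s) * (2 * t) + (4 + 2 * s) := by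
    funext t
    rw [hyf]
    have h1 : HasDerivAt (fun t : ℝ => -(3 + 2 * s) * t ^ 2 + (4 + 2 * s) * t)
        (-(3 + 2 * s) * (2 * t) + (4 + 2 * s)) t := by
      have := ((hasDerivAt_pow 2 t).const_mul (-(3 + 2 * s))).add
        ((hasDerivAt_id t).const_mul (4 + 2 * s))
      simpa [Pi.add_def] using this
    exact h1.deriv
  have h1 : y 0 = 0 := by rw [hy]; ring
  have h2 : y 1 = 1 := by rw [hy]; nlinarith [hs2]
  refine ⟨h1, h2, ?_⟩
  rw [hd]
  have e1 : (∫ t in (0:ℝ)..1, t * (-(3 + 2 * s) * (2 * t) + (4 + 2 * s)))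
      = -s / 3 := by
    have : ∀ t : ℝ, t * (-(3 + 2 * s) * (2 * t) + (4 + 2 * s))
        = (-(2 * (3 + 2 * s))) * t ^ 2 + (4 + 2 * s) * t := by intro t; ring
    simp only [this]
    rw [intervalIntegral.integral_add ((intervalIntegral.intervalIntegrable_pow 2).const_mul _)
      (intervalIntegral.intervalIntegrable_id.const_mul _),
      intervalIntegral.integral_const_mul, intervalIntegral.integral_const_mul,
      integral_pow, integral_id]
    ring
  have e2 : (∫ t in (0:ℝ)..1, (-(3 + 2 * s) * (2 * t) + (4 + 2 * s)) ^ 2)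
      = 8 + 4 * s := by
    have : ∀ t : ℝ, (-(3 + 2 * s) * (2 * t) + (4 + 2 * s)) ^ 2
        = (4 * (3 + 2 * s) ^ 2) * t ^ 2 + (-(4 * (3 + 2 * s) * (4 + 2 * s))) * t
          + (4 + 2 * s) ^ 2 := by intro t; ring
    simp only [this]
    rw [intervalIntegral.integral_add
      (((intervalIntegral.intervalIntegrable_pow 2).const_mul _).add
        (intervalIntegral.intervalIntegrable_id.const_mul _))
      intervalIntegrable_const,
      intervalIntegral.integral_add ((intervalIntegral.intervalIntegrable_pow 2).const_mul _)
        (intervalIntegral.intervalIntegrable_id.const_mul _),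
      intervalIntegral.integral_const_mul, intervalIntegral.integral_const_mul,
      integral_pow, integral_id, integral_const]
    simp only [smul_eq_mul]
    push_cast
    nlinarith [hs2]
  rw [e1, e2]
  have hspos : (0:ℝ) < s := Real.sqrt_pos.mpr (by norm_num)
  rw [div_eq_div_iff (by nlinarith) (by norm_num)]
  nlinarith [hs2]
end

section
/- Discrete integral Euler–Lagrange equation: let a, b ∈ ℤ with a + 1 < b, let L : ℤ × ℝ × ℝ → ℝ be such that (y, v) ↦ L(t, y, v) is continuously differentiable for each t, and suppose ŷ : {a, …, b} → ℝ is a local minimizer (with respect to the sup norm) of 𝓛[y] = ∑_{t=a}^{b−1} L(t, y(t+1), Δy(t)) over all y : {a, …, b} → ℝ with y(a) = ŷ(a) and y(b) = ŷ(b), where Δy(t) = y(t+1) − y(t). Then there exists a constant c ∈ ℝ such that for all t ∈ {a, …, b−1}: L_v(t, ŷ(t+1), Δŷ(t)) = ∑_{τ=a}^{t−1} L_y(τ, ŷ(τ+1), Δŷ(τ)) + c, where L_y and L_v denote the partial derivatives of L with respect to its second and third arguments. -/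
lemma slice_fst (f : ℝ × ℝ → ℝ) (hf : Differentiable ℝ f) (y v : ℝ) :
    deriv (fun u => f (u, v)) y = fderiv ℝ f (y, v) (1, 0) := by
  have h1 : HasDerivAt (fun u : ℝ => (u, v)) ((1:ℝ), (0:ℝ)) y :=
    HasDerivAt.prodMk (hasDerivAt_id y) (hasDerivAt_const y v)
  exact ((hf (y, v)).hasFDerivAt.comp_hasDerivAt y h1).deriv

lemma slice_snd (f : ℝ × ℝ → ℝ) (hf : Differentiable ℝ f) (y v : ℝ) :
    deriv (fun w => f (y, w)) v = fderiv ℝ f (y, v) (0, 1) := by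
  have h1 : HasDerivAt (fun w : ℝ => (y, w)) ((0:ℝ), (1:ℝ)) v :=
    HasDerivAt.prodMk (hasDerivAt_const v y) (hasDerivAt_id v)
  exact ((hf (y, v)).hasFDerivAt.comp_hasDerivAt v h1).deriv

lemma el_step (a b : ℤ) (δ : ℝ) (hδ : 0 < δ) (L : ℤ → ℝ → ℝ → ℝ)
    (hL : ∀ t : ℤ, ContDiff ℝ 1 (fun p : ℝ × ℝ => L t p.1 p.2)) (yhat : ℤ → ℝ)
    (hmin : ∀ y : ℤ → ℝ, y a = yhat a → y b = yhat b →
      (∀ t ∈ Finset.Icc a b, |y t - yhat t| < δ) →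
      ∑ t ∈ Finset.Ico a b, L t (yhat (t + 1)) (yhat (t + 1) - yhat t)
        ≤ ∑ t ∈ Finset.Ico a b, L t (y (t + 1)) (y (t + 1) - y t))
    (t : ℤ) (hat : a ≤ t) (htb : t + 1 < b) :
    fderiv ℝ (fun p : ℝ × ℝ => L (t+1) p.1 p.2)
        (yhat (t+1+1), yhat (t+1+1) - yhat (t+1)) (0, 1)
      = fderiv ℝ (fun p : ℝ × ℝ => L t p.1 p.2)
          (yhat (t+1), yhat (t+1) - yhat t) (0, 1)
        + fderiv ℝ (fun p : ℝ × ℝ => L t p.1 p.2)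
          (yhat (t+1), yhat (t+1) - yhat t) (1, 0) := by
  set f : ℤ → ℝ × ℝ → ℝ := fun r p => L r p.1 p.2 with hf
  have hfd : ∀ r, Differentiable ℝ (f r) := fun r => (hL r).differentiable one_ne_zero
  -- perturbed family
  set Y : ℝ → ℤ → ℝ := fun ε r => if r = t + 1 then yhat r + ε else yhat r with hY
  set g : ℝ → ℝ := fun ε => ∑ r ∈ Finset.Ico a b, L r (Y ε (r+1)) (Y ε (r+1) - Y ε r)
    with hg
  have ht_mem : t ∈ Finset.Ico a b := Finset.mem_Ico.mpr ⟨hat, by omega⟩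
  have ht1_mem : (t+1) ∈ Finset.Ico a b := Finset.mem_Ico.mpr ⟨by omega, htb⟩
  -- decomposition of g
  set C : ℝ := ∑ r ∈ Finset.Ico a b \ {t, t+1}, L r (yhat (r+1)) (yhat (r+1) - yhat r)
  have hsub : ({t, t+1} : Finset ℤ) ⊆ Finset.Ico a b := by
    intro x hx
    simp only [Finset.mem_insert, Finset.mem_singleton] at hx
    rcases hx with rfl | rfl
    · exact ht_mem
    · exact ht1_mem
  have hdecomp : ∀ ε : ℝ, g ε = C +
      (L t (yhat (t+1) + ε) (yhat (t+1) + ε - yhat t)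
       + L (t+1) (yhat (t+1+1)) (yhat (t+1+1) - (yhat (t+1) + ε))) := by
    intro ε
    have := (Finset.sum_sdiff hsub (f := fun r => L r (Y ε (r+1)) (Y ε (r+1) - Y ε r))).symm
    rw [hg]
    simp only
    rw [this]
    congr 1
    · apply Finset.sum_congr rfl
      intro r hr
      simp only [Finset.mem_sdiff, Finset.mem_insert, Finset.mem_singleton] at hr
      push_neg at hr
      have h1 : ¬ (r + 1 = t + 1) := by omega
      have h2 : ¬ (r = t + 1) := hr.2.2
      simp only [hY, if_neg h1, if_neg h2]
    · rw [Finset.sum_pair (by omega : t ≠ t + 1)]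
      have e1 : Y ε (t+1) = yhat (t+1) + ε := by simp [hY]
      have e2 : Y ε t = yhat t := by simp [hY, (by omega : t ≠ t + 1)]
      have e3 : Y ε (t+1+1) = yhat (t+1+1) := by simp [hY, (by omega : t+1+1 ≠ t + 1)]
      rw [e1, e2, e3]
  -- local minimum of g at 0
  have hloc : IsLocalMin g 0 := by
    have hg0 : g 0 = ∑ r ∈ Finset.Ico a b, L r (yhat (r+1)) (yhat (r+1) - yhat r) := by
      rw [hg]
      apply Finset.sum_congr rfl
      intro r _
      simp [hY]
    rw [IsLocalMin, IsMinFilter]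
    filter_upwards [Metric.ball_mem_nhds (0:ℝ) hδ] with ε hε
    rw [Metric.mem_ball, Real.dist_eq, sub_zero] at hε
    rw [hg0]
    apply hmin
    · show (if a = t + 1 then yhat a + ε else yhat a) = yhat a
      rw [if_neg (by omega)]
    · show (if b = t + 1 then yhat b + ε else yhat b) = yhat b
      rw [if_neg (by omega)]
    · intro r _
      by_cases h : r = t + 1 <;> simp [hY, h, hε, hδ]
  -- derivative of g at 0
  have hA : HasDerivAt (fun ε : ℝ => L t (yhat (t+1) + ε) (yhat (t+1) + ε - yhat t))
      (fderiv ℝ (f t) (yhat (t+1), yhat (t+1) - yhat t) (1, 1)) 0 := by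
    have hin : HasDerivAt (fun ε : ℝ => (yhat (t+1) + ε, yhat (t+1) + ε - yhat t))
        ((1:ℝ), (1:ℝ)) 0 := by
      exact HasDerivAt.prodMk (((hasDerivAt_id (0:ℝ)).const_add (yhat (t+1))))
        (((hasDerivAt_id (0:ℝ)).const_add (yhat (t+1))).sub_const (yhat t))
    have := ((hfd t _).hasFDerivAt.comp_hasDerivAt 0 hin)
    simp only [add_zero] at this
    exact this
  have hB : HasDerivAt (fun ε : ℝ => L (t+1) (yhat (t+1+1)) (yhat (t+1+1) - (yhat (t+1) + ε)))
      (fderiv ℝ (f (t+1)) (yhat (t+1+1), yhat (t+1+1) - yhat (t+1)) (0, -1)) 0 := by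
    have hin : HasDerivAt (fun ε : ℝ => (yhat (t+1+1), yhat (t+1+1) - (yhat (t+1) + ε)))
        ((0:ℝ), (-1:ℝ)) 0 := by
      have : HasDerivAt (fun ε : ℝ => yhat (t+1+1) - (yhat (t+1) + ε)) (-1) 0 := by
        simpa using (((hasDerivAt_id (0:ℝ)).const_add (yhat (t+1))).const_sub (yhat (t+1+1)))
      exact HasDerivAt.prodMk (hasDerivAt_const (0:ℝ) (yhat (t+1+1))) this
    have := ((hfd (t+1) _).hasFDerivAt.comp_hasDerivAt 0 hin)
    simp only [add_zero] at this
    exact this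
  have hGd : HasDerivAt g
      (fderiv ℝ (f t) (yhat (t+1), yhat (t+1) - yhat t) (1, 1)
       + fderiv ℝ (f (t+1)) (yhat (t+1+1), yhat (t+1+1) - yhat (t+1)) (0, -1)) 0 := by
    have := ((hA.add hB).const_add C)
    have heq : g = fun ε => C +
      (L t (yhat (t+1) + ε) (yhat (t+1) + ε - yhat t)
       + L (t+1) (yhat (t+1+1)) (yhat (t+1+1) - (yhat (t+1) + ε))) := funext hdecomp
    rw [heq]
    exact this
  have hzero : fderiv ℝ (f t) (yhat (t+1), yhat (t+1) - yhat t) (1, 1)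
      + fderiv ℝ (f (t+1)) (yhat (t+1+1), yhat (t+1+1) - yhat (t+1)) (0, -1) = 0 := by
    have := hloc.deriv_eq_zero
    rw [hGd.deriv] at this
    exact this
  have h11 : fderiv ℝ (f t) (yhat (t+1), yhat (t+1) - yhat t) (1, 1)
      = fderiv ℝ (f t) (yhat (t+1), yhat (t+1) - yhat t) (1, 0)
        + fderiv ℝ (f t) (yhat (t+1), yhat (t+1) - yhat t) (0, 1) := by
    rw [← map_add]
    norm_num
  have hneg : fderiv ℝ (f (t+1)) (yhat (t+1+1), yhat (t+1+1) - yhat (t+1)) (0, -1)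
      = - fderiv ℝ (f (t+1)) (yhat (t+1+1), yhat (t+1+1) - yhat (t+1)) (0, 1) := by
    rw [← map_neg]
    norm_num
  rw [h11, hneg] at hzero
  have : f t = fun p : ℝ × ℝ => L t p.1 p.2 := rfl
  linarith [hzero]

/-- Discrete integral Euler–Lagrange equation on ℤ: if yhat is a local minimizer
(in sup norm) of 𝓛[y] = ∑_{t=a}^{b−1} L(t, y(t+1), Δy(t)) among functions with
the same boundary values, then there is c ∈ ℝ with
L_v(t, yhat(t+1), Δyhat(t)) = ∑_{τ=a}^{t−1} L_y(τ, yhat(τ+1), Δyhat(τ)) + c for a ≤ t ≤ b−1. -/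
theorem discrete_integral_euler_lagrange
    (a b : ℤ) (hab : a + 1 < b)
    (L : ℤ → ℝ → ℝ → ℝ)
    (hL : ∀ t : ℤ, ContDiff ℝ 1 (fun p : ℝ × ℝ => L t p.1 p.2))
    (yhat : ℤ → ℝ)
    (hmin : ∃ δ > (0:ℝ), ∀ y : ℤ → ℝ, y a = yhat a → y b = yhat b →
      (∀ t ∈ Finset.Icc a b, |y t - yhat t| < δ) →
      ∑ t ∈ Finset.Ico a b, L t (yhat (t + 1)) (yhat (t + 1) - yhat t)
        ≤ ∑ t ∈ Finset.Ico a b, L t (y (t + 1)) (y (t + 1) - y t)) :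
    ∃ c : ℝ, ∀ t ∈ Finset.Ico a b,
      deriv (fun v => L t (yhat (t + 1)) v) (yhat (t + 1) - yhat t)
        = (∑ τ ∈ Finset.Ico a t,
            deriv (fun u => L τ u (yhat (τ + 1) - yhat τ)) (yhat (τ + 1))) + c := by
  obtain ⟨δ, hδ, hmin⟩ := hmin
  have hfd : ∀ t : ℤ, Differentiable ℝ (fun p : ℝ × ℝ => L t p.1 p.2) :=
    fun t => (hL t).differentiable one_ne_zero
  set Lv : ℤ → ℝ := fun t =>
    fderiv ℝ (fun p : ℝ × ℝ => L t p.1 p.2) (yhat (t+1), yhat (t+1) - yhat t) (0, 1) with hLv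
  set Ly : ℤ → ℝ := fun t =>
    fderiv ℝ (fun p : ℝ × ℝ => L t p.1 p.2) (yhat (t+1), yhat (t+1) - yhat t) (1, 0) with hLy
  have key : ∀ t : ℤ, a ≤ t → t < b → Lv t = (∑ τ ∈ Finset.Ico a t, Ly τ) + Lv a := by
    have H : ∀ t : ℤ, a ≤ t →
        (t < b → Lv t = (∑ τ ∈ Finset.Ico a t, Ly τ) + Lv a) := by
      intro t ht
      refine Int.le_induction (motive := fun t _ => t < b → Lv t = (∑ τ ∈ Finset.Ico a t, Ly τ) + Lv a) ?_ ?_ t ht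
      · intro _; simp
      · intro n hn IH hn1b
        have hnb : n < b := by omega
        have hstep := el_step a b δ hδ L hL yhat hmin n hn hn1b
        have hico : Finset.Ico a (n+1) = insert n (Finset.Ico a n) := by
          ext x; simp only [Finset.mem_Ico, Finset.mem_insert]; omega
        have hsum : ∑ τ ∈ Finset.Ico a (n+1), Ly τ
            = (∑ τ ∈ Finset.Ico a n, Ly τ) + Ly n := by
          rw [hico, Finset.sum_insert (by simp), add_comm]
        have hIH := IH hnb
        have h' : Lv (n+1) = Lv n + Ly n := hstep
        rw [hsum]
        linarith
    exact fun t ht => H t ht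
  refine ⟨Lv a, ?_⟩
  intro t ht
  rw [Finset.mem_Ico] at ht
  have h1 : deriv (fun v => L t (yhat (t + 1)) v) (yhat (t + 1) - yhat t) = Lv t :=
    slice_snd _ (hfd t) _ _
  have h2 : ∀ τ : ℤ, deriv (fun u => L τ u (yhat (τ + 1) - yhat τ)) (yhat (τ + 1)) = Ly τ :=
    fun τ => slice_fst _ (hfd τ) _ _
  rw [h1]
  simp only [h2]
  exact key t ht.1 ht.2
end

section
/- Euler–Lagrange equation for a quotient functional on ℝ: let f₁, f₂ : ℝ × ℝ × ℝ → ℝ be continuously differentiable, a < b, and suppose ŷ ∈ C¹([a,b]) is a local minimizer (in the C¹ norm) of 𝓛[y] = (∫_a^b f₁(t, y(t), y'(t)) dt)/(∫_a^b f₂(t, y(t), y'(t)) dt) subject to y(a) = ŷ(a), y(b) = ŷ(b), where F₂ := ∫_a^b f₂(t, ŷ(t), ŷ'(t)) dt ≠ 0. Set F₁ := ∫_a^b f₁(t, ŷ(t), ŷ'(t)) dt. Then there is a constant c such that for all t ∈ [a,b]: (1/F₂)·(f₁ᵥ(t, ŷ(t), ŷ'(t)) − ∫_a^t f₁ᵧ(τ,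 ŷ(τ), ŷ'(τ)) dτ) − (F₁/F₂²)·(f₂ᵥ(t, ŷ(t), ŷ'(t)) − ∫_a^t f₂ᵧ(τ, ŷ(τ), ŷ'(τ)) dτ) = c, where fᵧ, fᵥ denote partial derivatives with respect to the second and third arguments. -/
open Set intervalIntegral

namespace ELQ
open MeasureTheory


noncomputable def pd₂ (f : ℝ → ℝ → ℝ → ℝ) (t u v : ℝ) : ℝ :=
  fderiv ℝ (fun p : ℝ × ℝ × ℝ => f p.1 p.2.1 p.2.2) (t, u, v) (0, 1, 0)

noncomputable def pd₃ (f : ℝ → ℝ → ℝ → ℝ) (t u v : ℝ) : ℝ :=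
  fderiv ℝ (fun p : ℝ × ℝ × ℝ => f p.1 p.2.1 p.2.2) (t, u, v) (0, 0, 1)

variable {f : ℝ → ℝ → ℝ → ℝ}

lemma hasDerivAt_pd₂ (hf : ContDiff ℝ 1 (fun p : ℝ × ℝ × ℝ => f p.1 p.2.1 p.2.2))
    (t u v : ℝ) : HasDerivAt (fun u' => f t u' v) (pd₂ f t u v) u := by
  have hg : HasDerivAt (fun u' : ℝ => ((t, u', v) : ℝ × ℝ × ℝ)) (0, 1, 0) u :=
    (hasDerivAt_const u t).prodMk ((hasDerivAt_id u).prodMk (hasDerivAt_const u v))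
  exact ((hf.differentiable one_ne_zero (t, u, v)).hasFDerivAt).comp_hasDerivAt u hg

lemma hasDerivAt_pd₃ (hf : ContDiff ℝ 1 (fun p : ℝ × ℝ × ℝ => f p.1 p.2.1 p.2.2))
    (t u v : ℝ) : HasDerivAt (fun v' => f t u v') (pd₃ f t u v) v := by
  have hg : HasDerivAt (fun v' : ℝ => ((t, u, v') : ℝ × ℝ × ℝ)) (0, 0, 1) v :=
    (hasDerivAt_const v t).prodMk ((hasDerivAt_const v u).prodMk (hasDerivAt_id v))
  exact ((hf.differentiable one_ne_zero (t, u, v)).hasFDerivAt).comp_hasDerivAt v hg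

lemma fderiv_dir (hf : ContDiff ℝ 1 (fun p : ℝ × ℝ × ℝ => f p.1 p.2.1 p.2.2))
    (t u v c d : ℝ) :
    fderiv ℝ (fun p : ℝ × ℝ × ℝ => f p.1 p.2.1 p.2.2) (t, u, v) (0, c, d)
      = c * pd₂ f t u v + d * pd₃ f t u v := by
  have h : ((0, c, d) : ℝ × ℝ × ℝ) = c • ((0, 1, 0) : ℝ × ℝ × ℝ) + d • ((0, 0, 1) : ℝ × ℝ × ℝ) := by
    simp [Prod.ext_iff]
  rw [h, map_add, _root_.map_smul, _root_.map_smul]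
  simp [pd₂, pd₃, smul_eq_mul]

lemma continuous_pd₂ (hf : ContDiff ℝ 1 (fun p : ℝ × ℝ × ℝ => f p.1 p.2.1 p.2.2)) :
    Continuous (fun p : ℝ × ℝ × ℝ => pd₂ f p.1 p.2.1 p.2.2) := by
  have h := (hf.continuous_fderiv one_ne_zero).clm_apply
    (continuous_const : Continuous fun _ : ℝ × ℝ × ℝ => ((0, 1, 0) : ℝ × ℝ × ℝ))
  simpa [pd₂] using h

lemma continuous_pd₃ (hf : ContDiff ℝ 1 (fun p : ℝ × ℝ × ℝ => f p.1 p.2.1 p.2.2)) :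
    Continuous (fun p : ℝ × ℝ × ℝ => pd₃ f p.1 p.2.1 p.2.2) := by
  have h := (hf.continuous_fderiv one_ne_zero).clm_apply
    (continuous_const : Continuous fun _ : ℝ × ℝ × ℝ => ((0, 0, 1) : ℝ × ℝ × ℝ))
  simpa [pd₃] using h


lemma hasDerivAt_integral_var
    (hf : ContDiff ℝ 1 (fun p : ℝ × ℝ × ℝ => f p.1 p.2.1 p.2.2))
    (a b : ℝ) {y w η ζ : ℝ → ℝ}
    (hy : Continuous y) (hw : Continuous w) (hη : Continuous η) (hζ : Continuous ζ) :
    HasDerivAt (fun ε => ∫ t in a..b, f t (y t + ε * η t) (w t + ε * ζ t))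
      (∫ t in a..b, pd₂ f t (y t) (w t) * η t + pd₃ f t (y t) (w t) * ζ t) 0 := by
  set F : ℝ → ℝ → ℝ := fun ε t => f t (y t + ε * η t) (w t + ε * ζ t) with hF
  set F' : ℝ → ℝ → ℝ := fun ε t =>
    pd₂ f t (y t + ε * η t) (w t + ε * ζ t) * η t
      + pd₃ f t (y t + ε * η t) (w t + ε * ζ t) * ζ t with hF'def
  have hm : Continuous (fun q : ℝ × ℝ => ((q.2, y q.2 + q.1 * η q.2, w q.2 + q.1 * ζ q.2) : ℝ × ℝ × ℝ)) := by
    fun_prop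
  have hF'c2 : Continuous (fun q : ℝ × ℝ => F' q.1 q.2) := by
    exact (((continuous_pd₂ hf).comp hm).mul (hη.comp continuous_snd)).add
      (((continuous_pd₃ hf).comp hm).mul (hζ.comp continuous_snd))
  have hFc : ∀ x : ℝ, Continuous (F x) := by
    intro x
    exact hf.continuous.comp (by fun_prop : Continuous fun t => ((t, y t + x * η t, w t + x * ζ t) : ℝ × ℝ × ℝ))
  have hF'c : ∀ x : ℝ, Continuous (F' x) := fun x =>
    hF'c2.comp (by fun_prop : Continuous fun t : ℝ => ((x, t) : ℝ × ℝ))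
  obtain ⟨C, hC⟩ := (isCompact_Icc.prod isCompact_uIcc :
      IsCompact ((Icc (-1:ℝ) 1) ×ˢ uIcc a b)).exists_bound_of_continuousOn hF'c2.continuousOn
  have hdiff : ∀ (t x : ℝ), HasDerivAt (fun x' => F x' t) (F' x t) x := by
    intro t x
    have hg : HasDerivAt (fun x' : ℝ => ((t, y t + x' * η t, w t + x' * ζ t) : ℝ × ℝ × ℝ))
        (0, η t, ζ t) x := by
      refine (hasDerivAt_const x t).prodMk (HasDerivAt.prodMk ?_ ?_)
      · simpa using ((hasDerivAt_mul_const (η t)).const_add (y t))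
      · simpa using ((hasDerivAt_mul_const (ζ t)).const_add (w t))
    have h := ((hf.differentiable one_ne_zero _).hasFDerivAt).comp_hasDerivAt x hg
    rw [fderiv_dir hf] at h
    simpa [hF, hF'def, Function.comp_def, mul_comm] using h
  have key := intervalIntegral.hasDerivAt_integral_of_dominated_loc_of_deriv_le
    (F := F) (F' := F') (x₀ := (0:ℝ)) (bound := fun _ => C) (a := a) (b := b)
    (μ := volume) (Metric.ball_mem_nhds (0:ℝ) one_pos)
    (Filter.Eventually.of_forall fun x => (hFc x).aestronglyMeasurable)
    ((hFc 0).intervalIntegrable a b)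
    ((hF'c 0).aestronglyMeasurable)
    (Filter.Eventually.of_forall ?_)
    (intervalIntegrable_const)
    (Filter.Eventually.of_forall fun t _ x _ => hdiff t x)
  · have h2 := key.2
    have : (∫ t in a..b, F' 0 t) = ∫ t in a..b,
        pd₂ f t (y t) (w t) * η t + pd₃ f t (y t) (w t) * ζ t := by
      apply intervalIntegral.integral_congr
      intro t _
      simp [hF'def]
    rwa [this] at h2
  · intro t ht x hx
    have hx' : x ∈ Icc (-1:ℝ) 1 := by
      have := Metric.mem_ball.mp hx
      rw [Real.dist_eq, sub_zero] at this
      constructor <;> [linarith [abs_lt.mp this |>.1]; linarith [abs_lt.mp this |>.2]]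
    exact hC (x, t) ⟨hx', Set.uIoc_subset_uIcc ht⟩



lemma parts (a b : ℝ) {P Q η : ℝ → ℝ} (hP : Continuous P) (hQ : Continuous Q)
    (hη : ContDiff ℝ 1 η) (ha : η a = 0) (hb : η b = 0) :
    (∫ t in a..b, P t * η t + Q t * deriv η t)
      = ∫ t in a..b, (Q t - ∫ τ in a..t, P τ) * deriv η t := by
  set A : ℝ → ℝ := fun t => ∫ τ in a..t, P τ with hAdef
  have hA : ∀ t, HasDerivAt A (P t) t := fun t =>
    intervalIntegral.integral_hasDerivAt_right (hP.intervalIntegrable a t)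
      (hP.stronglyMeasurableAtFilter _ _) hP.continuousAt
  have hAc : Continuous A :=
    continuous_iff_continuousAt.mpr fun t => (hA t).differentiableAt.continuousAt
  have hηc := hη.continuous
  have hη' := hη.continuous_deriv le_rfl
  have hprod : ∀ t ∈ uIcc a b, HasDerivAt (fun s => A s * η s) (P t * η t + A t * deriv η t) t :=
    fun t _ => by exact (hA t).mul (hη.differentiable one_ne_zero t).hasDerivAt
  have hint1 : IntervalIntegrable (fun t => P t * η t + A t * deriv η t) MeasureTheory.volume a b :=
    ((hP.mul hηc).add (hAc.mul hη')).intervalIntegrable a b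
  have hint2 : IntervalIntegrable (fun t => P t * η t + Q t * deriv η t) MeasureTheory.volume a b :=
    ((hP.mul hηc).add (hQ.mul hη')).intervalIntegrable a b
  have h0 : (∫ t in a..b, P t * η t + A t * deriv η t) = 0 := by
    rw [intervalIntegral.integral_eq_sub_of_hasDerivAt hprod hint1, ha, hb]
    simp
  have hsplit : (∫ t in a..b, (Q t - A t) * deriv η t)
      = (∫ t in a..b, P t * η t + Q t * deriv η t)
        - ∫ t in a..b, P t * η t + A t * deriv η t := by
    rw [← intervalIntegral.integral_sub hint2 hint1]
    apply intervalIntegral.integral_congr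
    intro t _
    ring
  rw [hsplit, h0, sub_zero]

lemma dbr {G : ℝ → ℝ} (hG : Continuous G) {a b : ℝ} (hab : a < b)
    (h : ∀ η : ℝ → ℝ, ContDiff ℝ 1 η → η a = 0 → η b = 0 →
      (∫ t in a..b, G t * deriv η t) = 0) :
    ∃ c : ℝ, ∀ t ∈ Icc a b, G t = c := by
  set c : ℝ := (∫ t in a..b, G t) / (b - a) with hc
  refine ⟨c, ?_⟩
  have hba : b - a ≠ 0 := sub_ne_zero.mpr hab.ne'
  have hGc : Continuous (fun t => G t - c) := hG.sub continuous_const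
  set η : ℝ → ℝ := fun t => ∫ τ in a..t, (G τ - c) with hηdef
  have hη : ∀ t, HasDerivAt η (G t - c) t := fun t =>
    intervalIntegral.integral_hasDerivAt_right (hGc.intervalIntegrable a t)
      (hGc.stronglyMeasurableAtFilter _ _) hGc.continuousAt
  have hderiv : deriv η = fun t => G t - c := funext fun t => (hη t).deriv
  have hηC1 : ContDiff ℝ 1 η := contDiff_one_iff_deriv.mpr
    ⟨fun t => (hη t).differentiableAt, by rw [hderiv]; exact hGc⟩
  have hsub : (∫ t in a..b, (G t - c)) = 0 := by
    rw [intervalIntegral.integral_sub (hG.intervalIntegrable a b) (intervalIntegrable_const)]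
    simp only [intervalIntegral.integral_const, smul_eq_mul, hc]
    field_simp
    ring
  have hηa : η a = 0 := intervalIntegral.integral_same
  have hηb : η b = 0 := hsub
  have hzero := h η hηC1 hηa hηb
  rw [hderiv] at hzero
  have hsq : (∫ t in a..b, (G t - c) ^ 2) = 0 := by
    have e1 : (∫ t in a..b, (G t - c) ^ 2)
        = (∫ t in a..b, G t * (G t - c)) - c * ∫ t in a..b, (G t - c) := by
      rw [← intervalIntegral.integral_const_mul, ← intervalIntegral.integral_sub
        (show IntervalIntegrable (fun t => G t * (G t - c)) volume a b from (hG.mul hGc).intervalIntegrable a b)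
        (show IntervalIntegrable (fun t => c * (G t - c)) volume a b from (continuous_const.mul hGc).intervalIntegrable a b)]
      apply intervalIntegral.integral_congr
      intro t _
      ring
    rw [e1, hzero, hsub, mul_zero, sub_zero]
  have hcont2 : Continuous (fun t => (G t - c) ^ 2) := hGc.pow 2
  have hae : (fun t => (G t - c) ^ 2) =ᵐ[volume.restrict (Ioc a b)] 0 := by
    refine (intervalIntegral.integral_eq_zero_iff_of_le_of_nonneg_ae hab.le ?_
      (hcont2.intervalIntegrable a b)).mp hsq
    exact Filter.Eventually.of_forall fun t => sq_nonneg _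
  have hae' : (fun t => (G t - c) ^ 2) =ᵐ[volume.restrict (Icc a b)] 0 := by
    rwa [Measure.restrict_congr_set Ioc_ae_eq_Icc] at hae
  have heq : EqOn (fun t => (G t - c) ^ 2) 0 (Icc a b) :=
    Measure.eqOn_Icc_of_ae_eq volume hab.ne hae' hcont2.continuousOn continuousOn_const
  intro t ht
  have := heq ht
  simp only [Pi.zero_apply] at this
  have h2 : G t - c = 0 := by
    have := sq_eq_zero_iff.mp this
    exact this
  linarith [h2]


end ELQ

open ELQ in
/-- Euler–Lagrange equation for the quotient functional
𝓛[y] = (∫_a^b f₁(t,y,y') dt)/(∫_a^b f₂(t,y,y') dt) on ℝ: if yhat is a local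
minimizer in the C¹ norm with fixed boundary values and F₂ ≠ 0, then
(1/F₂)(f₁ᵥ − ∫_a^t f₁ᵧ) − (F₁/F₂²)(f₂ᵥ − ∫_a^t f₂ᵧ) is constant on [a,b]. -/
theorem euler_lagrange_quotient
    (a b : ℝ) (hab : a < b)
    (f₁ f₂ : ℝ → ℝ → ℝ → ℝ)
    (hf₁ : ContDiff ℝ 1 (fun p : ℝ × ℝ × ℝ => f₁ p.1 p.2.1 p.2.2))
    (hf₂ : ContDiff ℝ 1 (fun p : ℝ × ℝ × ℝ => f₂ p.1 p.2.1 p.2.2))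
    (yhat : ℝ → ℝ) (hyhat : ContDiff ℝ 1 yhat)
    (F₁ F₂ : ℝ)
    (hF₁ : F₁ = ∫ t in a..b, f₁ t (yhat t) (deriv yhat t))
    (hF₂ : F₂ = ∫ t in a..b, f₂ t (yhat t) (deriv yhat t))
    (hF₂0 : F₂ ≠ 0)
    (hmin : ∃ δ > (0:ℝ), ∀ y : ℝ → ℝ, ContDiff ℝ 1 y →
      y a = yhat a → y b = yhat b →
      (∀ t ∈ Icc a b, |y t - yhat t| < δ ∧ |deriv y t - deriv yhat t| < δ) →
      (∫ t in a..b, f₁ t (yhat t) (deriv yhat t))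
          / (∫ t in a..b, f₂ t (yhat t) (deriv yhat t))
        ≤ (∫ t in a..b, f₁ t (y t) (deriv y t))
          / (∫ t in a..b, f₂ t (y t) (deriv y t))) :
    ∃ c : ℝ, ∀ t ∈ Icc a b,
      (1 / F₂) * (deriv (fun v => f₁ t (yhat t) v) (deriv yhat t)
          - ∫ τ in a..t, deriv (fun u => f₁ τ u (deriv yhat τ)) (yhat τ))
      - (F₁ / F₂ ^ 2) * (deriv (fun v => f₂ t (yhat t) v) (deriv yhat t)
          - ∫ τ in a..t, deriv (fun u => f₂ τ u (deriv yhat τ)) (yhat τ)) = c := by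
  classical
  obtain ⟨δ, hδ, hm⟩ := hmin
  have hYc : Continuous yhat := hyhat.continuous
  have hVc : Continuous (deriv yhat) := hyhat.continuous_deriv le_rfl
  -- continuity of the partial-derivative compositions
  have hmap : Continuous (fun t : ℝ => ((t, yhat t, deriv yhat t) : ℝ × ℝ × ℝ)) := by fun_prop
  have hP₁ : Continuous (fun t => pd₂ f₁ t (yhat t) (deriv yhat t)) :=
    (continuous_pd₂ hf₁).comp hmap
  have hQ₁ : Continuous (fun t => pd₃ f₁ t (yhat t) (deriv yhat t)) :=
    (continuous_pd₃ hf₁).comp hmap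
  have hP₂ : Continuous (fun t => pd₂ f₂ t (yhat t) (deriv yhat t)) :=
    (continuous_pd₂ hf₂).comp hmap
  have hQ₂ : Continuous (fun t => pd₃ f₂ t (yhat t) (deriv yhat t)) :=
    (continuous_pd₃ hf₂).comp hmap
  -- primitives are continuous
  have hprim : ∀ {P : ℝ → ℝ}, Continuous P → Continuous (fun t => ∫ τ in a..t, P τ) := by
    intro P hP
    refine continuous_iff_continuousAt.mpr fun t => ?_
    exact (intervalIntegral.integral_hasDerivAt_right (hP.intervalIntegrable a t)
      (hP.stronglyMeasurableAtFilter _ _) hP.continuousAt).differentiableAt.continuousAt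
  have hA₁c : Continuous (fun t => ∫ τ in a..t, pd₂ f₁ τ (yhat τ) (deriv yhat τ)) := hprim hP₁
  have hA₂c : Continuous (fun t => ∫ τ in a..t, pd₂ f₂ τ (yhat τ) (deriv yhat τ)) := hprim hP₂
  set G : ℝ → ℝ := fun t =>
    (1 / F₂) * (pd₃ f₁ t (yhat t) (deriv yhat t)
        - ∫ τ in a..t, pd₂ f₁ τ (yhat τ) (deriv yhat τ))
      - (F₁ / F₂ ^ 2) * (pd₃ f₂ t (yhat t) (deriv yhat t)
        - ∫ τ in a..t, pd₂ f₂ τ (yhat τ) (deriv yhat τ)) with hGdef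
  have hGc : Continuous G :=
    ((continuous_const.mul (hQ₁.sub hA₁c))).sub (continuous_const.mul (hQ₂.sub hA₂c))
  -- the variational condition
  have hvar : ∀ η : ℝ → ℝ, ContDiff ℝ 1 η → η a = 0 → η b = 0 →
      (∫ t in a..b, G t * deriv η t) = 0 := by
    intro η hη hηa hηb
    have hηc := hη.continuous
    have hη'c := hη.continuous_deriv le_rfl
    -- bounds for η and η' on [a, b]
    obtain ⟨M₁, hM₁⟩ := isCompact_Icc.exists_bound_of_continuousOn
      (hηc.continuousOn : ContinuousOn η (Icc a b))
    obtain ⟨M₂, hM₂⟩ := isCompact_Icc.exists_bound_of_continuousOn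
      (hη'c.continuousOn : ContinuousOn (deriv η) (Icc a b))
    set M : ℝ := max M₁ M₂ with hMdef
    have hM0 : 0 ≤ M :=
      le_trans (norm_nonneg (η a)) (le_trans (hM₁ a ⟨le_rfl, hab.le⟩) (le_max_left _ _))
    have hθpos : 0 < δ / (M + 1) := div_pos hδ (by linarith)
    -- derivative of the two integral functionals at 0
    have h1 := hasDerivAt_integral_var hf₁ a b hYc hVc hηc hη'c
    have h2 := hasDerivAt_integral_var hf₂ a b hYc hVc hηc hη'c
    set D₁ : ℝ := ∫ t in a..b, pd₂ f₁ t (yhat t) (deriv yhat t) * η t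
        + pd₃ f₁ t (yhat t) (deriv yhat t) * deriv η t with hD₁def
    set D₂ : ℝ := ∫ t in a..b, pd₂ f₂ t (yhat t) (deriv yhat t) * η t
        + pd₃ f₂ t (yhat t) (deriv yhat t) * deriv η t with hD₂def
    have hI₁0 : (∫ t in a..b, f₁ t (yhat t + 0 * η t) (deriv yhat t + 0 * deriv η t)) = F₁ := by
      rw [hF₁]; apply intervalIntegral.integral_congr; intro t _; norm_num
    have hI₂0 : (∫ t in a..b, f₂ t (yhat t + 0 * η t) (deriv yhat t + 0 * deriv η t)) = F₂ := by
      rw [hF₂]; apply intervalIntegral.integral_congr; intro t _; norm_num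
    set J : ℝ → ℝ := fun ε =>
      (∫ t in a..b, f₁ t (yhat t + ε * η t) (deriv yhat t + ε * deriv η t))
        / (∫ t in a..b, f₂ t (yhat t + ε * η t) (deriv yhat t + ε * deriv η t)) with hJdef
    have hJ : HasDerivAt J ((D₁ * F₂ - F₁ * D₂) / F₂ ^ 2) 0 := by
      have := h1.div h2 (by rw [hI₂0]; exact hF₂0)
      simp only [hI₁0, hI₂0] at this
      exact this
    -- J has a local minimum at 0
    have hlocmin : IsLocalMin J 0 := by
      filter_upwards [Metric.ball_mem_nhds (0:ℝ) hθpos] with ε hε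
      have hεabs : |ε| < δ / (M + 1) := by
        simpa [Real.dist_eq] using Metric.mem_ball.mp hε
      set y : ℝ → ℝ := fun t => yhat t + ε * η t with hydef
      have hyC1 : ContDiff ℝ 1 y := hyhat.add (contDiff_const.mul hη)
      have hyderiv : ∀ t, deriv y t = deriv yhat t + ε * deriv η t := by
        intro t
        exact (((hyhat.differentiable one_ne_zero t).hasDerivAt).add
          (((hη.differentiable one_ne_zero t).hasDerivAt).const_mul ε)).deriv
      have hclose : ∀ t ∈ Icc a b, |y t - yhat t| < δ ∧ |deriv y t - deriv yhat t| < δ := by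
        intro t ht
        have hb₁ : |η t| ≤ M := le_trans (hM₁ t ht) (le_max_left _ _)
        have hb₂ : |deriv η t| ≤ M := le_trans (hM₂ t ht) (le_max_right _ _)
        have habs : ∀ z : ℝ, |z| ≤ M → |ε * z| < δ := by
          intro z hz
          have h1 : |ε * z| = |ε| * |z| := abs_mul ε z
          have h2 : |ε| * |z| ≤ |ε| * M := mul_le_mul_of_nonneg_left (hz) (abs_nonneg ε)
          have h3 : |ε| * M < (δ / (M + 1)) * (M + 1) := by
            have : |ε| * M ≤ |ε| * (M + 1) := by nlinarith [abs_nonneg ε]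
            have h4 : |ε| * (M + 1) < (δ / (M + 1)) * (M + 1) := by
              apply mul_lt_mul_of_pos_right hεabs (by linarith)
            linarith
          have h5 : (δ / (M + 1)) * (M + 1) = δ := by field_simp
          linarith
        constructor
        · have hyy : y t - yhat t = ε * η t := by simp only [hydef]; ring
          rw [hyy]; exact habs _ hb₁
        · rw [hyderiv t]
          have : deriv yhat t + ε * deriv η t - deriv yhat t = ε * deriv η t := by ring
          rw [this]; exact habs _ hb₂
      have hineq := hm y hyC1 (by simp [hydef, hηa]) (by simp [hydef, hηb]) hclose
      have hrw₁ : (∫ t in a..b, f₁ t (y t) (deriv y t))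
          = ∫ t in a..b, f₁ t (yhat t + ε * η t) (deriv yhat t + ε * deriv η t) := by
        apply intervalIntegral.integral_congr; intro t _
        show f₁ t (y t) (deriv y t) = _
        rw [hyderiv t]
      have hrw₂ : (∫ t in a..b, f₂ t (y t) (deriv y t))
          = ∫ t in a..b, f₂ t (yhat t + ε * η t) (deriv yhat t + ε * deriv η t) := by
        apply intervalIntegral.integral_congr; intro t _
        show f₂ t (y t) (deriv y t) = _
        rw [hyderiv t]
      have hJ0 : J 0 = F₁ / F₂ := by simp only [hJdef, hI₁0, hI₂0]
      have hJε : J ε = (∫ t in a..b, f₁ t (y t) (deriv y t))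
          / (∫ t in a..b, f₂ t (y t) (deriv y t)) := by
        simp only [hJdef, hrw₁, hrw₂]
      rw [hJ0, hJε, hF₁, hF₂]
      exact hineq
    have hD0 : (D₁ * F₂ - F₁ * D₂) / F₂ ^ 2 = 0 := by
      rw [← hJ.deriv]; exact hlocmin.deriv_eq_zero
    have hD : D₁ * F₂ - F₁ * D₂ = 0 := by
      rcases div_eq_zero_iff.mp hD0 with h | h
      · exact h
      · exact absurd h (pow_ne_zero 2 hF₂0)
    -- integration by parts
    have e₁ : D₁ = ∫ t in a..b, (pd₃ f₁ t (yhat t) (deriv yhat t)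
        - ∫ τ in a..t, pd₂ f₁ τ (yhat τ) (deriv yhat τ)) * deriv η t := by
      rw [hD₁def]; exact parts a b hP₁ hQ₁ hη hηa hηb
    have e₂ : D₂ = ∫ t in a..b, (pd₃ f₂ t (yhat t) (deriv yhat t)
        - ∫ τ in a..t, pd₂ f₂ τ (yhat τ) (deriv yhat τ)) * deriv η t := by
      rw [hD₂def]; exact parts a b hP₂ hQ₂ hη hηa hηb
    have hint₁ : IntervalIntegrable (fun t => (pd₃ f₁ t (yhat t) (deriv yhat t)
        - ∫ τ in a..t, pd₂ f₁ τ (yhat τ) (deriv yhat τ)) * deriv η t) MeasureTheory.volume a b :=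
      ((hQ₁.sub hA₁c).mul hη'c).intervalIntegrable a b
    have hint₂ : IntervalIntegrable (fun t => (pd₃ f₂ t (yhat t) (deriv yhat t)
        - ∫ τ in a..t, pd₂ f₂ τ (yhat τ) (deriv yhat τ)) * deriv η t) MeasureTheory.volume a b :=
      ((hQ₂.sub hA₂c).mul hη'c).intervalIntegrable a b
    have hsplit : (∫ t in a..b, G t * deriv η t)
        = (1 / F₂) * (∫ t in a..b, (pd₃ f₁ t (yhat t) (deriv yhat t)
            - ∫ τ in a..t, pd₂ f₁ τ (yhat τ) (deriv yhat τ)) * deriv η t)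
          - (F₁ / F₂ ^ 2) * ∫ t in a..b, (pd₃ f₂ t (yhat t) (deriv yhat t)
            - ∫ τ in a..t, pd₂ f₂ τ (yhat τ) (deriv yhat τ)) * deriv η t := by
      rw [← intervalIntegral.integral_const_mul, ← intervalIntegral.integral_const_mul,
        ← intervalIntegral.integral_sub (hint₁.const_mul _) (hint₂.const_mul _)]
      apply intervalIntegral.integral_congr
      intro t _
      simp only [hGdef]
      ring
    rw [hsplit, ← e₁, ← e₂]
    have hF₂sq : F₂ ^ 2 ≠ 0 := pow_ne_zero 2 hF₂0
    have hfin : (1 / F₂) * D₁ - (F₁ / F₂ ^ 2) * D₂ = (D₁ * F₂ - F₁ * D₂) / F₂ ^ 2 := by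
      field_simp
    rw [hfin, hD, zero_div]
  obtain ⟨c, hcall⟩ := dbr hGc hab hvar
  refine ⟨c, fun t ht => ?_⟩
  have hGt := hcall t ht
  have r₁ : deriv (fun v => f₁ t (yhat t) v) (deriv yhat t)
      = pd₃ f₁ t (yhat t) (deriv yhat t) := (hasDerivAt_pd₃ hf₁ _ _ _).deriv
  have r₂ : deriv (fun v => f₂ t (yhat t) v) (deriv yhat t)
      = pd₃ f₂ t (yhat t) (deriv yhat t) := (hasDerivAt_pd₃ hf₂ _ _ _).deriv
  have r₃ : (∫ τ in a..t, deriv (fun u => f₁ τ u (deriv yhat τ)) (yhat τ))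
      = ∫ τ in a..t, pd₂ f₁ τ (yhat τ) (deriv yhat τ) :=
    intervalIntegral.integral_congr fun τ _ => (hasDerivAt_pd₂ hf₁ _ _ _).deriv
  have r₄ : (∫ τ in a..t, deriv (fun u => f₂ τ u (deriv yhat τ)) (yhat τ))
      = ∫ τ in a..t, pd₂ f₂ τ (yhat τ) (deriv yhat τ) :=
    intervalIntegral.integral_congr fun τ _ => (hasDerivAt_pd₂ hf₂ _ _ _).deriv
  rw [r₁, r₂, r₃, r₄]
  exact hGt
end
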